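/- For integers b,k,h ≥ 3, the number of skew cross polyominoes inscribed in a b×k×h prism equals 64 · Σ_{i=0}^{b+k-6} Σ_{r=0}^{i} Σ_{j=0}^{b-3-r} binomial(b, 3+r+j)·binomial(k, 3+i+j-r)·binomial(h, 3+i), where this is the coefficient of x^b y^k z^h in 64x³y³z³/((1-x-y)(1-x-z)(1-y-z)(1-x)²(1-y)²(1-z)²). -/

import Mathlib

open MvPowerSeries Finset

/-! Auxiliary development: explicit coefficients of the inverse of
`(1-x-y)(1-x-z)(1-y-z)(1-x)²(1-y)²(1-z)²` in `MvPowerSeries (Fin 3) ℚ`. -/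

def ch (a b : ℕ) : ℚ := (a.choose b : ℚ)

lemma ch_eq_zero {a b : ℕ} (h : a < b) : ch a b = 0 := by
  simp [ch, Nat.choose_eq_zero_of_lt h]

lemma ch_succ (a b : ℕ) : ch (a+1) (b+1) = ch a (b+1) + ch a b := by
  simp [ch, Nat.choose_succ_succ]; ring

lemma pas3 (a t s : ℕ) : ch (a+3) (3+t+s) = ch (a+2) (3+t+s) + ch (a+2) (2+t+s) := by
  have h := ch_succ (a+2) (2+t+s)
  rw [show a+2+1 = a+3 from by omega, show 2+t+s+1 = 3+t+s from by omega] at h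
  exact h

lemma pas2 (a s : ℕ) : ch (a+2) (2+s) = ch (a+1) (2+s) + ch (a+1) (1+s) := by
  have h := ch_succ (a+1) (1+s)
  rw [show a+1+1 = a+2 from by omega, show 1+s+1 = 2+s from by omega] at h
  exact h

def S3 (N m n p : ℕ) : ℚ :=
  ∑ s ∈ range N, ∑ u ∈ range N,
    (∑ t ∈ range N, ch (m+3) (3+t+s) * ch (n+3) (3+t+u)) * ch (p+3) (3+s+u)

def S2 (N m n p : ℕ) : ℚ :=
  ∑ u ∈ range N,
    (∑ s ∈ range N, ch (m+2) (2+s) * ch (p+3) (3+s+u)) * ch (n+2) (2+u)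

def S1 (N m n p : ℕ) : ℚ :=
  (∑ u ∈ range N, ch (n+2) (2+u) * ch (p+2) (2+u)) * ch (m+1) 1

lemma stab3 {N N' m n p : ℕ} (hm : m+1 ≤ N) (hp : p+1 ≤ N) (hNN : N ≤ N') :
    S3 N m n p = S3 N' m n p := by
  unfold S3
  rw [Finset.sum_subset (Finset.range_subset_range.2 hNN)]
  · refine Finset.sum_congr rfl fun s hs => ?_
    rw [Finset.sum_subset (Finset.range_subset_range.2 hNN)]
    · refine Finset.sum_congr rfl fun u hu => ?_
      congr 1
      rw [Finset.sum_subset (Finset.range_subset_range.2 hNN)]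
      intro t _ ht
      rw [ch_eq_zero (by simp only [mem_range, not_lt] at ht; omega), zero_mul]
    · intro u _ hu
      simp only [mem_range, not_lt] at hu
      rw [ch_eq_zero (by omega), mul_zero]
  · intro s _ hs
    simp only [mem_range, not_lt] at hs
    refine Finset.sum_eq_zero fun u _ => ?_
    rw [Finset.sum_eq_zero fun t _ => by rw [ch_eq_zero (by omega), zero_mul], zero_mul]

lemma stab2 {N N' m n p : ℕ} (hm : m+1 ≤ N) (hn : n+1 ≤ N) (hNN : N ≤ N') :
    S2 N m n p = S2 N' m n p := by
  unfold S2
  rw [Finset.sum_subset (Finset.range_subset_range.2 hNN)]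
  · refine Finset.sum_congr rfl fun u hu => ?_
    congr 1
    rw [Finset.sum_subset (Finset.range_subset_range.2 hNN)]
    intro s _ hs
    simp only [mem_range, not_lt] at hs
    rw [ch_eq_zero (by omega), zero_mul]
  · intro u _ hu
    simp only [mem_range, not_lt] at hu
    rw [ch_eq_zero (show n+2 < 2+u by omega), mul_zero]

lemma stab1 {N N' m n p : ℕ} (hn : n+1 ≤ N) (hNN : N ≤ N') :
    S1 N m n p = S1 N' m n p := by
  unfold S1
  congr 1
  rw [Finset.sum_subset (Finset.range_subset_range.2 hNN)]
  intro u _ hu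
  simp only [mem_range, not_lt] at hu
  rw [ch_eq_zero (show n+2 < 2+u by omega), zero_mul]

lemma termA (m n t s u : ℕ) :
    ch (m+3) (3+t+s) * ch (n+3) (3+t+u) - ch (m+2) (3+t+s) * ch (n+3) (3+t+u)
      - ch (m+3) (3+t+s) * ch (n+2) (3+t+u)
    = ch (m+2) (2+t+s) * ch (n+2) (2+t+u)
      - ch (m+2) (2+(t+1)+s) * ch (n+2) (2+(t+1)+u) := by
  rw [pas3 m t s, pas3 n t u, show 2+(t+1)+s = 3+t+s from by omega,
    show 2+(t+1)+u = 3+t+u from by omega]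
  ring

lemma stepA (N m n p : ℕ) (hN : m+1 ≤ N) :
    S3 N m n p - (if m = 0 then 0 else S3 N (m-1) n p)
      - (if n = 0 then 0 else S3 N m (n-1) p) = S2 N m n p := by
  have hx : (if m = 0 then 0 else S3 N (m-1) n p)
      = ∑ s ∈ range N, ∑ u ∈ range N,
          (∑ t ∈ range N, ch (m+2) (3+t+s) * ch (n+3) (3+t+u)) * ch (p+3) (3+s+u) := by
    rcases m with _ | m'
    · rw [if_pos rfl]
      symm
      refine Finset.sum_eq_zero fun s _ => ?_
      refine Finset.sum_eq_zero fun u _ => ?_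
      rw [Finset.sum_eq_zero fun t _ => by
        rw [ch_eq_zero (show 0+2 < 3+t+s from by omega), zero_mul], zero_mul]
    · rw [if_neg (by omega)]
      unfold S3
      simp only [Nat.add_sub_cancel, show m'+3 = m'+1+2 from by omega]
  have hy : (if n = 0 then 0 else S3 N m (n-1) p)
      = ∑ s ∈ range N, ∑ u ∈ range N,
          (∑ t ∈ range N, ch (m+3) (3+t+s) * ch (n+2) (3+t+u)) * ch (p+3) (3+s+u) := by
    rcases n with _ | n'
    · rw [if_pos rfl]
      symm
      refine Finset.sum_eq_zero fun s _ => ?_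
      refine Finset.sum_eq_zero fun u _ => ?_
      rw [Finset.sum_eq_zero fun t _ => by
        rw [ch_eq_zero (show 0+2 < 3+t+u from by omega), mul_zero], zero_mul]
    · rw [if_neg (by omega)]
      unfold S3
      simp only [Nat.add_sub_cancel, show n'+3 = n'+1+2 from by omega]
  rw [hx, hy]
  have main : S3 N m n p
      - (∑ s ∈ range N, ∑ u ∈ range N,
          (∑ t ∈ range N, ch (m+2) (3+t+s) * ch (n+3) (3+t+u)) * ch (p+3) (3+s+u))
      - (∑ s ∈ range N, ∑ u ∈ range N,
          (∑ t ∈ range N, ch (m+3) (3+t+s) * ch (n+2) (3+t+u)) * ch (p+3) (3+s+u))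
      = ∑ s ∈ range N, ∑ u ∈ range N,
          (ch (m+2) (2+s) * ch (n+2) (2+u)) * ch (p+3) (3+s+u) := by
    unfold S3
    rw [← Finset.sum_sub_distrib, ← Finset.sum_sub_distrib]
    refine Finset.sum_congr rfl fun s _ => ?_
    rw [← Finset.sum_sub_distrib, ← Finset.sum_sub_distrib]
    refine Finset.sum_congr rfl fun u _ => ?_
    rw [← sub_mul, ← sub_mul]
    congr 1
    rw [← Finset.sum_sub_distrib, ← Finset.sum_sub_distrib,
      Finset.sum_congr rfl (fun t _ => termA m n t s u),
      Finset.sum_range_sub' (fun t => ch (m+2) (2+t+s) * ch (n+2) (2+t+u)) N,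
      ch_eq_zero (show m+2 < 2+N+s from by omega), zero_mul, sub_zero]
  rw [main]
  rw [Finset.sum_comm]
  unfold S2
  refine Finset.sum_congr rfl fun u _ => ?_
  rw [Finset.sum_mul]
  exact Finset.sum_congr rfl fun s _ => by ring

lemma termB (m p s u : ℕ) :
    ch (m+2) (2+s) * ch (p+3) (3+s+u) - ch (m+1) (2+s) * ch (p+3) (3+s+u)
      - ch (m+2) (2+s) * ch (p+2) (3+s+u)
    = ch (m+1) (1+s) * ch (p+2) (2+s+u)
      - ch (m+1) (1+(s+1)) * ch (p+2) (2+(s+1)+u) := by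
  rw [pas2 m s, pas3 p s u, show 1+(s+1) = 2+s from by omega,
    show 2+(s+1)+u = 3+s+u from by omega]
  ring

lemma stepB (N m n p : ℕ) (hN : m+1 ≤ N) :
    S2 N m n p - (if m = 0 then 0 else S2 N (m-1) n p)
      - (if p = 0 then 0 else S2 N m n (p-1)) = S1 N m n p := by
  have hx : (if m = 0 then 0 else S2 N (m-1) n p)
      = ∑ u ∈ range N,
          (∑ s ∈ range N, ch (m+1) (2+s) * ch (p+3) (3+s+u)) * ch (n+2) (2+u) := by
    rcases m with _ | m'
    · rw [if_pos rfl]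
      symm
      refine Finset.sum_eq_zero fun u _ => ?_
      rw [Finset.sum_eq_zero fun s _ => by
        rw [ch_eq_zero (show 0+1 < 2+s from by omega), zero_mul], zero_mul]
    · rw [if_neg (by omega)]
      unfold S2
      simp only [Nat.add_sub_cancel, show m'+2 = m'+1+1 from by omega]
  have hz : (if p = 0 then 0 else S2 N m n (p-1))
      = ∑ u ∈ range N,
          (∑ s ∈ range N, ch (m+2) (2+s) * ch (p+2) (3+s+u)) * ch (n+2) (2+u) := by
    rcases p with _ | p'
    · rw [if_pos rfl]
      symm
      refine Finset.sum_eq_zero fun u _ => ?_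
      rw [Finset.sum_eq_zero fun s _ => by
        rw [ch_eq_zero (show 0+2 < 3+s+u from by omega), mul_zero], zero_mul]
    · rw [if_neg (by omega)]
      unfold S2
      simp only [Nat.add_sub_cancel, show p'+3 = p'+1+2 from by omega]
  rw [hx, hz]
  have main : S2 N m n p
      - (∑ u ∈ range N,
          (∑ s ∈ range N, ch (m+1) (2+s) * ch (p+3) (3+s+u)) * ch (n+2) (2+u))
      - (∑ u ∈ range N,
          (∑ s ∈ range N, ch (m+2) (2+s) * ch (p+2) (3+s+u)) * ch (n+2) (2+u))
      = ∑ u ∈ range N, (ch (m+1) 1 * ch (p+2) (2+u)) * ch (n+2) (2+u) := by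
    unfold S2
    rw [← Finset.sum_sub_distrib, ← Finset.sum_sub_distrib]
    refine Finset.sum_congr rfl fun u _ => ?_
    rw [← sub_mul, ← sub_mul]
    congr 1
    rw [← Finset.sum_sub_distrib, ← Finset.sum_sub_distrib,
      Finset.sum_congr rfl (fun s _ => termB m p s u),
      Finset.sum_range_sub' (fun s => ch (m+1) (1+s) * ch (p+2) (2+s+u)) N,
      ch_eq_zero (show m+1 < 1+N from by omega), zero_mul, sub_zero]
  rw [main]
  unfold S1
  rw [Finset.sum_mul]
  exact Finset.sum_congr rfl fun u _ => by ring

lemma termC (n p u : ℕ) :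
    ch (n+2) (2+u) * ch (p+2) (2+u) - ch (n+1) (2+u) * ch (p+2) (2+u)
      - ch (n+2) (2+u) * ch (p+1) (2+u)
    = ch (n+1) (1+u) * ch (p+1) (1+u)
      - ch (n+1) (1+(u+1)) * ch (p+1) (1+(u+1)) := by
  rw [pas2 n u, pas2 p u, show 1+(u+1) = 2+u from by omega]
  ring

lemma stepC (N m n p : ℕ) (hN : n+1 ≤ N) :
    S1 N m n p - (if n = 0 then 0 else S1 N m (n-1) p)
      - (if p = 0 then 0 else S1 N m n (p-1))
    = ch (m+1) 1 * (ch (n+1) 1 * ch (p+1) 1) := by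
  have hy : (if n = 0 then 0 else S1 N m (n-1) p)
      = (∑ u ∈ range N, ch (n+1) (2+u) * ch (p+2) (2+u)) * ch (m+1) 1 := by
    rcases n with _ | n'
    · rw [if_pos rfl]
      symm
      rw [Finset.sum_eq_zero fun u _ => by
        rw [ch_eq_zero (show 0+1 < 2+u from by omega), zero_mul], zero_mul]
    · rw [if_neg (by omega)]
      unfold S1
      simp only [Nat.add_sub_cancel, show n'+2 = n'+1+1 from by omega]
  have hz : (if p = 0 then 0 else S1 N m n (p-1))
      = (∑ u ∈ range N, ch (n+2) (2+u) * ch (p+1) (2+u)) * ch (m+1) 1 := by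
    rcases p with _ | p'
    · rw [if_pos rfl]
      symm
      rw [Finset.sum_eq_zero fun u _ => by
        rw [ch_eq_zero (show 0+1 < 2+u from by omega), mul_zero], zero_mul]
    · rw [if_neg (by omega)]
      unfold S1
      simp only [Nat.add_sub_cancel, show p'+2 = p'+1+1 from by omega]
  rw [hy, hz]
  unfold S1
  rw [← sub_mul, ← sub_mul, ← Finset.sum_sub_distrib, ← Finset.sum_sub_distrib,
    Finset.sum_congr rfl (fun u _ => termC n p u),
    Finset.sum_range_sub' (fun u => ch (n+1) (1+u) * ch (p+1) (1+u)) N,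
    ch_eq_zero (show n+1 < 1+N from by omega), zero_mul, sub_zero]
  ring

/-! The chain of coefficient functions. -/

def f3 (m n p : ℕ) : ℚ := S3 (m+p+1) m n p
def f2 (m n p : ℕ) : ℚ := S2 (m+n+1) m n p
def f1 (m n p : ℕ) : ℚ := S1 (n+1) m n p
def f0 (m n p : ℕ) : ℚ := ((m+1 : ℕ) : ℚ) * ((n+1 : ℕ) : ℚ) * ((p+1 : ℕ) : ℚ)
def c4 (_ n p : ℕ) : ℚ := ((n+1 : ℕ) : ℚ) * ((p+1 : ℕ) : ℚ)
def c5 (m n p : ℕ) : ℚ := if m = 0 then ((n+1 : ℕ) : ℚ) * ((p+1 : ℕ) : ℚ) else 0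
def c6 (m _ p : ℕ) : ℚ := if m = 0 then ((p+1 : ℕ) : ℚ) else 0
def c7 (m n p : ℕ) : ℚ := if m = 0 ∧ n = 0 then ((p+1 : ℕ) : ℚ) else 0
def c8 (m n _ : ℕ) : ℚ := if m = 0 ∧ n = 0 then (1 : ℚ) else 0
def c9 (m n p : ℕ) : ℚ := if m = 0 ∧ n = 0 ∧ p = 0 then (1 : ℚ) else 0

lemma bridge1 (m n p : ℕ) :
    f3 m n p - (if m = 0 then 0 else f3 (m-1) n p)
      - (if n = 0 then 0 else f3 m (n-1) p) = f2 m n p := by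
  set N := m+n+p+1 with hNdef
  have e1 : f3 m n p = S3 N m n p := stab3 (by omega) (by omega) (by omega)
  have e2 : (if m = 0 then 0 else f3 (m-1) n p)
      = (if m = 0 then 0 else S3 N (m-1) n p) := by
    rcases m with _ | m'
    · rfl
    · rw [if_neg (Nat.succ_ne_zero m'), if_neg (Nat.succ_ne_zero m')]
      exact stab3 (by omega) (by omega) (by omega)
  have e3 : (if n = 0 then 0 else f3 m (n-1) p)
      = (if n = 0 then 0 else S3 N m (n-1) p) := by
    rcases n with _ | n'
    · rfl
    · rw [if_neg (Nat.succ_ne_zero n'), if_neg (Nat.succ_ne_zero n')]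
      exact stab3 (by omega) (by omega) (by omega)
  rw [e1, e2, e3, stepA N m n p (by omega)]
  exact (stab2 (by omega) (by omega) (by omega)).symm

lemma bridge2 (m n p : ℕ) :
    f2 m n p - (if m = 0 then 0 else f2 (m-1) n p)
      - (if p = 0 then 0 else f2 m n (p-1)) = f1 m n p := by
  set N := m+n+p+1 with hNdef
  have e1 : f2 m n p = S2 N m n p := stab2 (by omega) (by omega) (by omega)
  have e2 : (if m = 0 then 0 else f2 (m-1) n p)
      = (if m = 0 then 0 else S2 N (m-1) n p) := by
    rcases m with _ | m'
    · rfl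
    · rw [if_neg (Nat.succ_ne_zero m'), if_neg (Nat.succ_ne_zero m')]
      exact stab2 (by omega) (by omega) (by omega)
  have e3 : (if p = 0 then 0 else f2 m n (p-1))
      = (if p = 0 then 0 else S2 N m n (p-1)) := by
    rcases p with _ | p'
    · rfl
    · rw [if_neg (Nat.succ_ne_zero p'), if_neg (Nat.succ_ne_zero p')]
      exact stab2 (by omega) (by omega) (by omega)
  rw [e1, e2, e3, stepB N m n p (by omega)]
  exact (stab1 (by omega) (by omega)).symm

lemma ch_one (a : ℕ) : ch (a+1) 1 = ((a+1 : ℕ) : ℚ) := by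
  simp [ch, Nat.choose_one_right]

lemma bridge3 (m n p : ℕ) :
    f1 m n p - (if n = 0 then 0 else f1 m (n-1) p)
      - (if p = 0 then 0 else f1 m n (p-1)) = f0 m n p := by
  set N := m+n+p+1 with hNdef
  have e1 : f1 m n p = S1 N m n p := stab1 (by omega) (by omega)
  have e2 : (if n = 0 then 0 else f1 m (n-1) p)
      = (if n = 0 then 0 else S1 N m (n-1) p) := by
    rcases n with _ | n'
    · rfl
    · rw [if_neg (Nat.succ_ne_zero n'), if_neg (Nat.succ_ne_zero n')]
      exact stab1 (by omega) (by omega)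
  have e3 : (if p = 0 then 0 else f1 m n (p-1))
      = (if p = 0 then 0 else S1 N m n (p-1)) := by
    rcases p with _ | p'
    · rfl
    · rw [if_neg (Nat.succ_ne_zero p'), if_neg (Nat.succ_ne_zero p')]
      exact stab1 (by omega) (by omega)
  rw [e1, e2, e3, stepC N m n p (by omega), ch_one, ch_one, ch_one]
  unfold f0
  ring

lemma bridge4 (m n p : ℕ) :
    f0 m n p - (if m = 0 then 0 else f0 (m-1) n p) = c4 m n p := by
  rcases m with _ | m'
  · simp [f0, c4]
  · rw [if_neg (Nat.succ_ne_zero m')]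
    unfold f0 c4
    simp only [Nat.add_sub_cancel]
    push_cast
    ring

lemma bridge5 (m n p : ℕ) :
    c4 m n p - (if m = 0 then 0 else c4 (m-1) n p) = c5 m n p := by
  rcases m with _ | m'
  · simp [c4, c5]
  · rw [if_neg (Nat.succ_ne_zero m')]
    unfold c4 c5
    rw [if_neg (Nat.succ_ne_zero m')]
    ring

lemma bridge6 (m n p : ℕ) :
    c5 m n p - (if n = 0 then 0 else c5 m (n-1) p) = c6 m n p := by
  unfold c5 c6
  rcases m with _ | m'
  · rcases n with _ | n'
    · norm_num
    · rw [if_neg (Nat.succ_ne_zero n'), if_pos rfl, if_pos rfl, if_pos rfl]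
      simp only [Nat.add_sub_cancel]
      push_cast
      ring
  · rcases n with _ | n' <;>
      simp [if_neg (Nat.succ_ne_zero m')]

lemma bridge7 (m n p : ℕ) :
    c6 m n p - (if n = 0 then 0 else c6 m (n-1) p) = c7 m n p := by
  unfold c6 c7
  rcases m with _ | m'
  · rcases n with _ | n'
    · norm_num
    · simp [Nat.succ_ne_zero]
  · rcases n with _ | n' <;> simp [Nat.succ_ne_zero]

lemma bridge8 (m n p : ℕ) :
    c7 m n p - (if p = 0 then 0 else c7 m n (p-1)) = c8 m n p := by
  unfold c7 c8
  by_cases hmn : m = 0 ∧ n = 0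
  · obtain ⟨rfl, rfl⟩ := hmn
    rcases p with _ | p'
    · norm_num
    · simp only [Nat.succ_ne_zero, if_neg, if_false, and_self, if_true, Nat.add_sub_cancel,
        if_pos]
      push_cast
      ring
  · rw [if_neg hmn, if_neg hmn]
    rcases p with _ | p' <;> simp [hmn]

lemma bridge9 (m n p : ℕ) :
    c8 m n p - (if p = 0 then 0 else c8 m n (p-1)) = c9 m n p := by
  unfold c8 c9
  by_cases hmn : m = 0 ∧ n = 0
  · obtain ⟨rfl, rfl⟩ := hmn
    rcases p with _ | p' <;> simp [Nat.succ_ne_zero]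
  · rcases p with _ | p' <;> simp [hmn]

/-! Series-level machinery. -/

def ser (f : ℕ → ℕ → ℕ → ℚ) : MvPowerSeries (Fin 3) ℚ := fun d => f (d 0) (d 1) (d 2)

lemma coeff_ser (f : ℕ → ℕ → ℕ → ℚ) (d : Fin 3 →₀ ℕ) :
    coeff d (ser f) = f (d 0) (d 1) (d 2) := rfl

lemma coeff_mul_one_sub_X (F : MvPowerSeries (Fin 3) ℚ) (i : Fin 3) (d : Fin 3 →₀ ℕ) :
    coeff d (F * (1 - X i)) =
      coeff d F - (if d i = 0 then 0 else coeff (d - Finsupp.single i 1) F) := by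
  rw [mul_sub, mul_one, map_sub, X, coeff_mul_monomial]
  congr 1
  rcases eq_or_ne (d i) 0 with h | h
  · rw [if_pos h, if_neg]
    rw [Finsupp.single_le_iff, h]; omega
  · rw [if_neg h, if_pos, mul_one]
    rw [Finsupp.single_le_iff]; omega

lemma coeff_mul_one_sub_XX (F : MvPowerSeries (Fin 3) ℚ) (i j : Fin 3) (d : Fin 3 →₀ ℕ) :
    coeff d (F * (1 - X i - X j)) =
      coeff d F - (if d i = 0 then 0 else coeff (d - Finsupp.single i 1) F)
        - (if d j = 0 then 0 else coeff (d - Finsupp.single j 1) F) := by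
  rw [show (1 - X i - X j : MvPowerSeries (Fin 3) ℚ) = (1 - X i) - X j from by ring, mul_sub,
    map_sub, coeff_mul_one_sub_X, X, coeff_mul_monomial]
  congr 1
  rcases eq_or_ne (d j) 0 with h | h
  · rw [if_pos h, if_neg]
    rw [Finsupp.single_le_iff, h]; omega
  · rw [if_neg h, if_pos, mul_one]
    rw [Finsupp.single_le_iff]; omega

lemma sub_single_same (d : Fin 3 →₀ ℕ) (i : Fin 3) :
    ((d - Finsupp.single i 1 : Fin 3 →₀ ℕ)) i = d i - 1 := by
  rw [Finsupp.tsub_apply, Finsupp.single_eq_same]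

lemma sub_single_ne (d : Fin 3 →₀ ℕ) {i j : Fin 3} (hne : i ≠ j) :
    ((d - Finsupp.single i 1 : Fin 3 →₀ ℕ)) j = d j := by
  rw [Finsupp.tsub_apply, Finsupp.single_eq_of_ne' hne, Nat.sub_zero]

lemma L1 : ser f3 * (1 - X 0 - X 1) = ser f2 := by
  ext d
  rw [coeff_mul_one_sub_XX]
  simp only [coeff_ser, sub_single_same,
    sub_single_ne d (show (0:Fin 3) ≠ 1 by decide),
    sub_single_ne d (show (0:Fin 3) ≠ 2 by decide),
    sub_single_ne d (show (1:Fin 3) ≠ 0 by decide),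
    sub_single_ne d (show (1:Fin 3) ≠ 2 by decide)]
  exact bridge1 (d 0) (d 1) (d 2)

lemma L2 : ser f2 * (1 - X 0 - X 2) = ser f1 := by
  ext d
  rw [coeff_mul_one_sub_XX]
  simp only [coeff_ser, sub_single_same,
    sub_single_ne d (show (0:Fin 3) ≠ 1 by decide),
    sub_single_ne d (show (0:Fin 3) ≠ 2 by decide),
    sub_single_ne d (show (2:Fin 3) ≠ 0 by decide),
    sub_single_ne d (show (2:Fin 3) ≠ 1 by decide)]
  exact bridge2 (d 0) (d 1) (d 2)

lemma L3 : ser f1 * (1 - X 1 - X 2) = ser f0 := by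
  ext d
  rw [coeff_mul_one_sub_XX]
  simp only [coeff_ser, sub_single_same,
    sub_single_ne d (show (1:Fin 3) ≠ 0 by decide),
    sub_single_ne d (show (1:Fin 3) ≠ 2 by decide),
    sub_single_ne d (show (2:Fin 3) ≠ 0 by decide),
    sub_single_ne d (show (2:Fin 3) ≠ 1 by decide)]
  exact bridge3 (d 0) (d 1) (d 2)

lemma L4 : ser f0 * (1 - X 0) = ser c4 := by
  ext d
  rw [coeff_mul_one_sub_X]
  simp only [coeff_ser, sub_single_same,
    sub_single_ne d (show (0:Fin 3) ≠ 1 by decide),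
    sub_single_ne d (show (0:Fin 3) ≠ 2 by decide)]
  exact bridge4 (d 0) (d 1) (d 2)

lemma L5 : ser c4 * (1 - X 0) = ser c5 := by
  ext d
  rw [coeff_mul_one_sub_X]
  simp only [coeff_ser, sub_single_same,
    sub_single_ne d (show (0:Fin 3) ≠ 1 by decide),
    sub_single_ne d (show (0:Fin 3) ≠ 2 by decide)]
  exact bridge5 (d 0) (d 1) (d 2)

lemma L6 : ser c5 * (1 - X 1) = ser c6 := by
  ext d
  rw [coeff_mul_one_sub_X]
  simp only [coeff_ser, sub_single_same,
    sub_single_ne d (show (1:Fin 3) ≠ 0 by decide),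
    sub_single_ne d (show (1:Fin 3) ≠ 2 by decide)]
  exact bridge6 (d 0) (d 1) (d 2)

lemma L7 : ser c6 * (1 - X 1) = ser c7 := by
  ext d
  rw [coeff_mul_one_sub_X]
  simp only [coeff_ser, sub_single_same,
    sub_single_ne d (show (1:Fin 3) ≠ 0 by decide),
    sub_single_ne d (show (1:Fin 3) ≠ 2 by decide)]
  exact bridge7 (d 0) (d 1) (d 2)

lemma L8 : ser c7 * (1 - X 2) = ser c8 := by
  ext d
  rw [coeff_mul_one_sub_X]
  simp only [coeff_ser, sub_single_same,
    sub_single_ne d (show (2:Fin 3) ≠ 0 by decide),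
    sub_single_ne d (show (2:Fin 3) ≠ 1 by decide)]
  exact bridge8 (d 0) (d 1) (d 2)

lemma L9 : ser c8 * (1 - X 2) = ser c9 := by
  ext d
  rw [coeff_mul_one_sub_X]
  simp only [coeff_ser, sub_single_same,
    sub_single_ne d (show (2:Fin 3) ≠ 0 by decide),
    sub_single_ne d (show (2:Fin 3) ≠ 1 by decide)]
  exact bridge9 (d 0) (d 1) (d 2)

lemma L10 : ser c9 = 1 := by
  ext d
  rw [coeff_ser, coeff_one]
  rcases eq_or_ne d 0 with rfl | hd
  · simp [c9]
  · rw [if_neg hd, c9, if_neg]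
    rintro ⟨h0, h1, h2⟩
    apply hd
    ext i
    fin_cases i <;> assumption

lemma chain : ser f3 * ((1 - X 0 - X 1) * (1 - X 0 - X 2) * (1 - X 1 - X 2) *
    (1 - X 0) ^ 2 * (1 - X 1) ^ 2 * (1 - X 2) ^ 2) = 1 := by
  have h : ser f3 * ((1 - X 0 - X 1) * (1 - X 0 - X 2) * (1 - X 1 - X 2) *
      (1 - X 0) ^ 2 * (1 - X 1) ^ 2 * (1 - X 2) ^ 2)
      = ((((((((ser f3 * (1 - X 0 - X 1)) * (1 - X 0 - X 2)) * (1 - X 1 - X 2))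
        * (1 - X 0)) * (1 - X 0)) * (1 - X 1)) * (1 - X 1)) * (1 - X 2)) * (1 - X 2) := by
    ring
  rw [h, L1, L2, L3, L4, L5, L6, L7, L8, L9, L10]

/-! The reindexing of the final triple sum. -/

lemma Tzero {b k i r j : ℕ} (h : ℕ) (hb : 3 ≤ b) (hk : 3 ≤ k) (hr : r ≤ i)
    (hi : b + k - 5 ≤ i) :
    b.choose (3+r+j) * k.choose (3+i+j-r) * h.choose (3+i) = 0 := by
  by_cases hbb : b < 3+r+j
  · rw [Nat.choose_eq_zero_of_lt hbb, zero_mul, zero_mul]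
  · have hkk : k < 3+i+j-r := by omega
    rw [Nat.choose_eq_zero_of_lt hkk, mul_zero, zero_mul]

lemma reindex (b k h : ℕ) (hb : 3 ≤ b) (hk : 3 ≤ k) (hh : 3 ≤ h) :
    f3 (b-3) (k-3) (h-3)
    = ∑ i ∈ range (b + k - 5), ∑ r ∈ range (i + 1), ∑ j ∈ range (b - 2 - r),
        ((b.choose (3+r+j) * k.choose (3+i+j-r) * h.choose (3+i) : ℕ) : ℚ) := by
  set M := b + k + h with hM
  -- canonical box form
  have hL : f3 (b-3) (k-3) (h-3)
      = ∑ s ∈ range M, ∑ u ∈ range M, ∑ t ∈ range M,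
          ch b (3+t+s) * ch k (3+t+u) * ch h (3+s+u) := by
    have : f3 (b-3) (k-3) (h-3) = S3 M (b-3) (k-3) (h-3) :=
      stab3 (by omega) (by omega) (by omega)
    rw [this]
    unfold S3
    simp only [show b-3+3 = b from by omega, show k-3+3 = k from by omega,
      show h-3+3 = h from by omega]
    refine Finset.sum_congr rfl fun s _ => ?_
    refine Finset.sum_congr rfl fun u _ => ?_
    rw [Finset.sum_mul]
  rw [hL]
  -- transform the RHS into the same box form
  have hcast : ∀ i r j : ℕ, ((b.choose (3+r+j) * k.choose (3+i+j-r) * h.choose (3+i) : ℕ) : ℚ)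
      = ch b (3+r+j) * ch k (3+i+j-r) * ch h (3+i) := by
    intro i r j
    unfold ch
    push_cast
    ring
  have hR : (∑ i ∈ range (b + k - 5), ∑ r ∈ range (i + 1), ∑ j ∈ range (b - 2 - r),
        ((b.choose (3+r+j) * k.choose (3+i+j-r) * h.choose (3+i) : ℕ) : ℚ))
      = ∑ i ∈ range M, ∑ r ∈ range (i + 1), ∑ j ∈ range M,
          ch b (3+r+j) * ch k (3+i+j-r) * ch h (3+i) := by
    rw [Finset.sum_subset (Finset.range_subset_range.2 (show b+k-5 ≤ M from by omega))]
    · refine Finset.sum_congr rfl fun i _ => ?_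
      refine Finset.sum_congr rfl fun r hr => ?_
      rw [Finset.sum_subset (Finset.range_subset_range.2 (show b-2-r ≤ M from by omega))]
      · exact Finset.sum_congr rfl fun j _ => hcast i r j
      · intro j _ hj
        simp only [mem_range, not_lt] at hj
        rw [hcast, ch_eq_zero (show b < 3+r+j from by omega)]
        ring
    · intro i _ hi
      simp only [mem_range, not_lt] at hi
      refine Finset.sum_eq_zero fun r hr => ?_
      refine Finset.sum_eq_zero fun j _ => ?_
      simp only [mem_range] at hr
      exact_mod_cast congrArg (Nat.cast : ℕ → ℚ) (Tzero (i := i) h hb hk (by omega) (by omega))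
  rw [hR]
  -- triangle swap on (i, r)
  have tri : (∑ i ∈ range M, ∑ r ∈ range (i + 1), ∑ j ∈ range M,
        ch b (3+r+j) * ch k (3+i+j-r) * ch h (3+i))
      = ∑ r ∈ range M, ∑ i ∈ Finset.Ico r M, ∑ j ∈ range M,
          ch b (3+r+j) * ch k (3+i+j-r) * ch h (3+i) := by
    have := Finset.sum_Ico_Ico_comm 0 M
      (fun r i => ∑ j ∈ range M, ch b (3+r+j) * ch k (3+i+j-r) * ch h (3+i))
    simp only [Finset.range_eq_Ico] at *
    rw [← this]
  rw [tri]
  refine Finset.sum_congr rfl fun r hr => ?_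
  rw [Finset.sum_Ico_eq_sum_range]
  simp only [mem_range] at hr
  rw [Finset.sum_subset (Finset.range_subset_range.2 (show M - r ≤ M from by omega))]
  · refine Finset.sum_congr rfl fun u _ => ?_
    refine Finset.sum_congr rfl fun j _ => ?_
    rw [show 3+(r+u)+j-r = 3+j+u from by omega, show 3+r+j = 3+j+r from by omega,
      show 3+(r+u) = 3+r+u from by omega]
  · intro u _ hu
    simp only [mem_range, not_lt] at hu
    refine Finset.sum_eq_zero fun j _ => ?_
    have h0 : b.choose (3+r+j) * k.choose (3+(r+u)+j-r) * h.choose (3+(r+u)) = 0 :=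
      Tzero h hb hk (by omega) (by omega)
    unfold ch
    exact_mod_cast congrArg (Nat.cast : ℕ → ℚ) h0

/-! Main theorem. -/

/-- Coefficient extraction for the skew-cross generating function: for
`b, k, h ≥ 3`, the coefficient of `x^b y^k z^h` in
`64x³y³z³/((1-x-y)(1-x-z)(1-y-z)(1-x)²(1-y)²(1-z)²)` equals
`64 Σ_{i=0}^{b+k-6} Σ_{r=0}^{i} Σ_{j=0}^{b-3-r} C(b,3+r+j) C(k,3+i+j-r) C(h,3+i)`. -/
theorem skew_cross_coeff (b k h : ℕ) (hb : 3 ≤ b) (hk : 3 ≤ k) (hh : 3 ≤ h) :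
    MvPowerSeries.coeff (R := ℚ)
        (Finsupp.single 0 b + Finsupp.single 1 k + Finsupp.single 2 h)
        (64 * X 0 ^ 3 * X 1 ^ 3 * X 2 ^ 3 *
          ((1 - X 0 - X 1) * (1 - X 0 - X 2) * (1 - X 1 - X 2) *
            (1 - X 0) ^ 2 * (1 - X 1) ^ 2 * (1 - X 2) ^ 2)⁻¹ :
          MvPowerSeries (Fin 3) ℚ) =
      64 * ∑ i ∈ Finset.range (b + k - 5), ∑ r ∈ Finset.range (i + 1),
            ∑ j ∈ Finset.range (b - 2 - r),
              ((Nat.choose b (3 + r + j) * Nat.choose k (3 + i + j - r) *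
                Nat.choose h (3 + i) : ℕ) : ℚ) := by
  have hD : constantCoeff (σ := Fin 3) (R := ℚ)
      ((1 - X 0 - X 1) * (1 - X 0 - X 2) * (1 - X 1 - X 2) *
        (1 - X 0) ^ 2 * (1 - X 1) ^ 2 * (1 - X 2) ^ 2) ≠ 0 := by
    simp [map_mul, map_sub, map_pow, map_one, constantCoeff_X]
  have hinv : (((1 - X 0 - X 1) * (1 - X 0 - X 2) * (1 - X 1 - X 2) *
      (1 - X 0) ^ 2 * (1 - X 1) ^ 2 * (1 - X 2) ^ 2 : MvPowerSeries (Fin 3) ℚ))⁻¹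
      = ser f3 :=
    (MvPowerSeries.inv_eq_iff_mul_eq_one hD).mpr chain
  rw [hinv]
  have hmono : (64 : MvPowerSeries (Fin 3) ℚ) * X 0 ^ 3 * X 1 ^ 3 * X 2 ^ 3
      = monomial (Finsupp.single 0 3 + Finsupp.single 1 3 + Finsupp.single 2 3) (64 : ℚ) := by
    rw [show (64 : MvPowerSeries (Fin 3) ℚ) = C (σ := Fin 3) (R := ℚ) 64 from (map_ofNat _ _).symm,
      ← monomial_zero_eq_C_apply, X_pow_eq, X_pow_eq, X_pow_eq,
      monomial_mul_monomial, monomial_mul_monomial, monomial_mul_monomial]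
    norm_num
  rw [hmono, coeff_monomial_mul]
  set d : Fin 3 →₀ ℕ := Finsupp.single 0 b + Finsupp.single 1 k + Finsupp.single 2 h with hd
  set e : Fin 3 →₀ ℕ := Finsupp.single 0 3 + Finsupp.single 1 3 + Finsupp.single 2 3 with he
  have hd0 : d 0 = b := by
    simp [hd, Finsupp.single_apply]
  have hd1 : d 1 = k := by
    simp [hd, Finsupp.single_apply]
  have hd2 : d 2 = h := by
    simp [hd, Finsupp.single_apply]
  have he0 : e 0 = 3 := by simp [he, Finsupp.single_apply]
  have he1 : e 1 = 3 := by simp [he, Finsupp.single_apply]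
  have he2 : e 2 = 3 := by simp [he, Finsupp.single_apply]
  have hle : e ≤ d := by
    rw [Finsupp.le_def]
    have g0 : e 0 ≤ d 0 := by rw [he0, hd0]; omega
    have g1 : e 1 ≤ d 1 := by rw [he1, hd1]; omega
    have g2 : e 2 ≤ d 2 := by rw [he2, hd2]; omega
    intro i
    fin_cases i
    exacts [g0, g1, g2]
  rw [if_pos hle, coeff_ser]
  have h0 : ((d - e : Fin 3 →₀ ℕ)) 0 = b - 3 := by rw [Finsupp.tsub_apply, hd0, he0]
  have h1 : ((d - e : Fin 3 →₀ ℕ)) 1 = k - 3 := by rw [Finsupp.tsub_apply, hd1, he1]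
  have h2 : ((d - e : Fin 3 →₀ ℕ)) 2 = h - 3 := by rw [Finsupp.tsub_apply, hd2, he2]
  rw [h0, h1, h2, reindex b k h hb hk hh]
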